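/- Let a, b, B be real numbers and c a positive integer with 1 ≤ a < b and c·a ≤ B ≤ c·b, and let f : ℝ → ℝ be convex and non-decreasing on the interval [a, b]. Then for every multiset M of c real numbers, each lying in [a, b], whose sum equals B, one has Σ_{m ∈ M} f(m) ≤ ((B − c·a)/(b − a) + 1)·(f(b) − f(a)) + c·f(a). -/

import Mathlib

lemma affine_multiset_sum (p q : ℝ) (M : Multiset ℝ) :
    (M.map (fun x => p + x * q)).sum = (Multiset.card M : ℝ) * p + M.sum * q := by
  induction M using Multiset.induction with
  | empty => simp
  | cons x s ih => simp [ih]; ring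

/-- Maximization of a convex non-decreasing function over multisets of
`c` reals in `[a, b]` with fixed sum `B`. -/
theorem stmt_16 (a b B : ℝ) (c : ℕ) (hc : 0 < c)
    (ha : 1 ≤ a) (hab : a < b)
    (hBl : (c : ℝ) * a ≤ B) (hBu : B ≤ (c : ℝ) * b)
    (f : ℝ → ℝ) (hconv : ConvexOn ℝ (Set.Icc a b) f)
    (hmono : MonotoneOn f (Set.Icc a b))
    (M : Multiset ℝ) (hcard : Multiset.card M = c)
    (hmem : ∀ x ∈ M, x ∈ Set.Icc a b) (hsum : M.sum = B) :
    (M.map f).sum ≤ ((B - c * a) / (b - a) + 1) * (f b - f a) + c * f a := by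
  have hba : (0:ℝ) < b - a := by linarith
  set k := (f b - f a) / (b - a) with hk
  have hfab : f a ≤ f b :=
    hmono (Set.left_mem_Icc.2 hab.le) (Set.right_mem_Icc.2 hab.le) hab.le
  have hk0 : 0 ≤ k := div_nonneg (by linarith) hba.le
  have key : ∀ x ∈ M, f x ≤ (f a - a * k) + x * k := by
    intro x hx
    obtain ⟨hax, hxb⟩ := hmem x hx
    have hs0 : 0 ≤ (b - x) / (b - a) := div_nonneg (by linarith) hba.le
    have ht0 : 0 ≤ (x - a) / (b - a) := div_nonneg (by linarith) hba.le
    have hst : (b - x) / (b - a) + (x - a) / (b - a) = 1 := by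
      field_simp
      ring
    have hc2 := hconv.2 (Set.left_mem_Icc.2 hab.le) (Set.right_mem_Icc.2 hab.le)
      hs0 ht0 hst
    have hne : b - a ≠ 0 := hba.ne'
    simp only [smul_eq_mul] at hc2
    have hx' : (b - x) / (b - a) * a + (x - a) / (b - a) * b = x := by
      field_simp
      ring
    rw [hx'] at hc2
    have heq : (b - x) / (b - a) * f a + (x - a) / (b - a) * f b
        = (f a - a * k) + x * k := by
      rw [hk]; field_simp; ring
    linarith [hc2, heq.le, heq.ge]
  have hsum' : (M.map f).sum ≤ (M.map (fun x => (f a - a * k) + x * k)).sum :=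
    Multiset.sum_map_le_sum_map _ _ key
  rw [affine_multiset_sum, hcard, hsum] at hsum'
  have hkey : (B - c * a) * k = (B - c * a) / (b - a) * (f b - f a) := by
    rw [hk]; ring
  nlinarith [hsum', hkey, hfab]
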